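/- Descending factorial moment: with ζ as above, E[(m−ζ)(m−ζ−1)] = ((n−1)/(n+1)) m(m−1). -/

import Mathlib

open Finset

-- hockey stick
lemma aux_hockey (c : ℕ) : ∀ t : ℕ, ∑ k ∈ range (t+1), (c + k).choose k = (c + t + 1).choose t := by
  intro t
  induction t with
  | zero => simp
  | succ t ih =>
    rw [Finset.sum_range_succ, ih]
    have : c + (t+1) + 1 = (c + t + 1) + 1 := by ring
    rw [this, Nat.choose_succ_succ (c + t + 1) t]
    congr 1

lemma aux_H (c n : ℕ) : ∑ k ∈ range (n+1), (c + k - 1).choose k = (c + n - 1 + 1).choose n := by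
  cases c with
  | zero =>
    rw [Finset.sum_eq_single 0]
    · cases n <;> simp
    · intro b _ hb
      obtain ⟨b, rfl⟩ := Nat.exists_eq_succ_of_ne_zero hb
      simp [Nat.choose_eq_zero_of_lt]
    · simp
  | succ c =>
    have : ∀ k, (c + 1 + k - 1) = c + k := by omega
    simp only [this]
    rw [aux_hockey]

lemma card_piAntidiag (ι : Type*) [DecidableEq ι] (s : Finset ι) (n : ℕ) :
    (Finset.piAntidiag s n).card = (s.card + n - 1).choose n := by
  induction s using Finset.cons_induction generalizing n with
  | empty =>
    rw [Finset.piAntidiag_empty]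
    split_ifs with h
    · subst h; simp
    · simp only [Finset.card_empty]
      exact (Nat.choose_eq_zero_of_lt (by omega)).symm
  | cons i s hi ih =>
    rw [Finset.piAntidiag_cons hi, Finset.card_disjiUnion]
    simp only [Finset.card_map, ih]
    rw [Finset.Nat.sum_antidiagonal_eq_sum_range_succ (fun a b => (s.card + b - 1).choose b)]
    have hrefl : ∀ k : ℕ, n - k = n + 1 - 1 - k := fun k => by omega
    simp only [hrefl]
    rw [Finset.sum_range_reflect (fun k => (s.card + k - 1).choose k) (n+1), aux_H]
    rw [Finset.card_cons]
    cases n with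
    | zero => simp
    | succ t =>
      have h2 : #s + (t+1) - 1 + 1 = #s + 1 + (t+1) - 1 := by omega
      rw [h2]

lemma fiber_sum {ι : Type*} [DecidableEq ι] (g : ℕ → ℝ) {i : ι} {s : Finset ι} (hi : i ∉ s)
    (n : ℕ) :
    ∑ f ∈ Finset.piAntidiag (Finset.cons i s hi) n, g (f i)
      = ∑ p ∈ Finset.HasAntidiagonal.antidiagonal n, ((Finset.piAntidiag s p.2).card : ℝ) * g p.1 := by
  rw [Finset.piAntidiag_cons hi, Finset.sum_disjiUnion]
  apply Finset.sum_congr rfl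
  intro p hp
  rw [Finset.sum_map]
  have hterm : ∀ f ∈ Finset.piAntidiag s p.2,
      g ((addRightEmbedding fun t => if t = i then p.1 else 0) f i) = g p.1 := by
    intro f hf
    have hfi : f i = 0 := by
      rw [Finset.mem_piAntidiag] at hf
      by_contra h
      exact hi (hf.2 i h)
    simp [addRightEmbedding_apply, hfi]
  rw [Finset.sum_congr rfl hterm, Finset.sum_const, nsmul_eq_mul]

lemma termwise (n j : ℕ) (hn : 2 ≤ n) :
    (j+2)*(j+1)*((n+j).choose (j+2)) = n*(n-1)*((n+j).choose j) := by
  have h1 : (n+j).choose (j+2) * (j+2) = (n+j).choose (j+1) * (n - 1) := by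
    have h := Nat.choose_succ_right_eq (n+j) (j+1)
    rwa [show n + j - (j+1) = n - 1 by omega] at h
  have h2 : (n+j).choose (j+1) * (j+1) = (n+j).choose j * n := by
    have h := Nat.choose_succ_right_eq (n+j) j
    rwa [show n + j - j = n by omega] at h
  calc (j+2)*(j+1)*((n+j).choose (j+2)) = ((n+j).choose (j+2) * (j+2)) * (j+1) := by ring
    _ = ((n+j).choose (j+1) * (j+1)) * (n-1) := by rw [h1]; ring
    _ = ((n+j).choose j * n) * (n-1) := by rw [h2]
    _ = n*(n-1)*((n+j).choose j) := by ring

lemma sum_id (n t : ℕ) (hn : 2 ≤ n) :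
    ∑ b ∈ range (t+2+1), b*(b-1)*((n-2+b).choose b)
      = n*(n-1)*((n+t+1).choose t) := by
  rw [Finset.sum_range_succ', Finset.sum_range_succ']
  simp only [Nat.add_sub_cancel]
  have h0 : ∀ j ∈ range (t+1), (j+1+1)*(j+1)*((n-2+(j+1+1)).choose (j+1+1))
      = n*(n-1)*((n+j).choose j) := by
    intro j hj
    rw [show n - 2 + (j+1+1) = n + j by omega]
    exact termwise n j hn
  rw [Finset.sum_congr rfl h0, ← Finset.mul_sum, aux_hockey]
  simp

lemma final_id (n t : ℕ) (hn : 2 ≤ n) :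
    (n + (t+2) - 1).choose (t+2) * ((t+2)*(t+1)) = (n+1)*n*((n+t+1).choose t) := by
  rw [show n + (t+2) - 1 = n + t + 1 by omega]
  have h1 : (n+t+1).choose (t+2) * (t+2) = (n+t+1).choose (t+1) * n := by
    have h := Nat.choose_succ_right_eq (n+t+1) (t+1)
    rwa [show n + t + 1 - (t+1) = n by omega] at h
  have h2 : (n+t+1).choose (t+1) * (t+1) = (n+t+1).choose t * (n+1) := by
    have h := Nat.choose_succ_right_eq (n+t+1) t
    rwa [show n + t + 1 - t = n + 1 by omega] at h
  calc (n+t+1).choose (t+2) * ((t+2)*(t+1))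
      = ((n+t+1).choose (t+2) * (t+2)) * (t+1) := by ring
    _ = ((n+t+1).choose (t+1) * (t+1)) * n := by rw [h1]; ring
    _ = ((n+t+1).choose t * (n+1)) * n := by rw [h2]
    _ = (n+1)*n*((n+t+1).choose t) := by ring


variable (V : Type*) [Fintype V] [DecidableEq V]

/-- Product-form (unnormalized) stationary weight of a configuration. -/
noncomputable def weight (π : V → ℝ) (r : V → ℕ → ℝ) (η : V → ℕ) : ℝ :=
  ∏ x, ∏ k ∈ Finset.Icc 1 (η x), π x / r x k

/-- Add one particle at site `x` : the configuration `η + δ_x`. -/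
def addOne (η : V → ℕ) (x : V) : V → ℕ := Function.update η x (η x + 1)

/-- Move a particle from `x` to `y`: the configuration `η + δ_y - δ_x`. -/
def move (η : V → ℕ) (x y : V) : V → ℕ :=
  addOne V (Function.update η x (η x - 1)) y

/-- The set of configurations of `m` particles on `V`. -/
def configs (m : ℕ) : Finset (V → ℕ) :=
  (Fintype.piFinset fun _ : V => Finset.range (m + 1)).filter fun η => ∑ x, η x = m

/-- Single-particle Dirichlet form `⟨φ, (I - P) ψ⟩_π`. -/
noncomputable def EP (π : V → ℝ) (P : V → V → ℝ) (φ ψ : V → ℝ) : ℝ :=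
  ∑ x, ∑ y, π x * P x y * (φ x * (ψ x - ψ y))

/-- Zero-range Dirichlet form with jump matrix `P`, rates `r` and measure `μ`
on configurations with `m` particles. -/
noncomputable def EZRP (P : V → V → ℝ) (r : V → ℕ → ℝ) (μ : (V → ℕ) → ℝ) (m : ℕ)
    (f g : (V → ℕ) → ℝ) : ℝ :=
  ∑ η ∈ configs V m, ∑ x, ∑ y,
    μ η * r x (η x) * P x y * (f η * (g η - g (move V η x y)))

/-- Mean of an observable on `m`-particle configurations under `μ`. -/
noncomputable def meanOn (m : ℕ) (μ : (V → ℕ) → ℝ) (f : (V → ℕ) → ℝ) : ℝ :=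
  ∑ η ∈ configs V m, μ η * f η

/-- Variance of an observable on `m`-particle configurations under `μ`. -/
noncomputable def varOn (m : ℕ) (μ : (V → ℕ) → ℝ) (f : (V → ℕ) → ℝ) : ℝ :=
  meanOn V m μ (fun η => (f η) ^ 2) - (meanOn V m μ f) ^ 2

/-- Variance of `φ : V → ℝ` under the probability vector `π`. -/
noncomputable def varPi (π : V → ℝ) (φ : V → ℝ) : ℝ :=
  ∑ x, π x * (φ x) ^ 2 - (∑ x, π x * φ x) ^ 2

/-- descending factorial moment
E[(m-ζ)(m-ζ-1)] = ((n-1)/(n+1)) m(m-1). -/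
private lemma configs_eq (m : ℕ) : configs V m = Finset.piAntidiag (Finset.univ : Finset V) m := by
  ext η
  simp only [configs, Finset.mem_filter, Fintype.mem_piFinset, Finset.mem_range,
    Finset.mem_piAntidiag, Finset.mem_univ, imp_true_iff, and_true]
  constructor
  · rintro ⟨-, h⟩; exact h
  · intro h
    refine ⟨fun x => ?_, h⟩
    have h2 := Finset.single_le_sum (f := η) (fun x _ => Nat.zero_le _) (Finset.mem_univ x)
    exact Nat.lt_succ_of_le (h ▸ h2)

/-- main -/
theorem uniform_occupation_factorial_moment (n m : ℕ) (hn : 2 ≤ n) (hm : 1 ≤ m)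
    (x₀ : Fin n) :
    meanOn (Fin n) m (fun _ => ((configs (Fin n) m).card : ℝ)⁻¹)
        (fun η => ((m : ℝ) - (η x₀ : ℝ)) * ((m : ℝ) - (η x₀ : ℝ) - 1))
      = ((n : ℝ) - 1) / ((n : ℝ) + 1) * (m : ℝ) * ((m : ℝ) - 1) := by
  rcases Nat.lt_or_ge m 2 with hm2 | hm2
  · have hm1 : m = 1 := by omega
    subst hm1
    rw [meanOn, Finset.sum_eq_zero]
    · norm_num
    · intro η hη
      rw [configs, Finset.mem_filter, Fintype.mem_piFinset] at hη
      have := hη.1 x₀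
      rw [Finset.mem_range] at this
      have h01 : η x₀ = 0 ∨ η x₀ = 1 := by omega
      rcases h01 with h | h <;> rw [h] <;> norm_num
  · obtain ⟨t, rfl⟩ : ∃ t, m = t + 2 := ⟨m - 2, by omega⟩
    have hcard : ((configs (Fin n) (t+2)).card : ℝ)
        = (((n + (t+2) - 1).choose (t+2) : ℕ) : ℝ) := by
      rw [configs_eq, card_piAntidiag]
      congr 2
      simp
    rw [meanOn, ← Finset.mul_sum, hcard, configs_eq]
    have hne : x₀ ∉ Finset.univ.erase x₀ := Finset.notMem_erase x₀ _
    have hx : (Finset.univ : Finset (Fin n)) = Finset.cons x₀ (Finset.univ.erase x₀) hne := by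
      rw [Finset.cons_eq_insert, Finset.insert_erase (Finset.mem_univ x₀)]
    rw [hx]
    have hfib := fiber_sum
      (fun k => (((t+2:ℕ) : ℝ) - (k:ℝ)) * (((t+2:ℕ) : ℝ) - (k:ℝ) - 1)) hne (t+2)
    rw [hfib, Finset.Nat.sum_antidiagonal_eq_sum_range_succ_mk]
    set F : ℕ → ℝ := fun b => (((n - 2 + b).choose b : ℕ) : ℝ) * ((b:ℝ) * ((b:ℝ) - 1)) with hF
    have hterm : ∀ k ∈ Finset.range (t+2+1),
        ((Finset.piAntidiag (Finset.univ.erase x₀) (t+2-k)).card : ℝ) *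
          ((((t+2:ℕ) : ℝ) - (k:ℝ)) * (((t+2:ℕ) : ℝ) - (k:ℝ) - 1)) = F (t+2-k) := by
      intro k hk
      rw [Finset.mem_range] at hk
      have hk' : k ≤ t + 2 := by omega
      rw [card_piAntidiag]
      have hc : (Finset.univ.erase x₀).card = n - 1 := by
        rw [Finset.card_erase_of_mem (Finset.mem_univ x₀)]
        simp
      rw [hc, show n - 1 + (t+2-k) - 1 = n - 2 + (t+2-k) by omega]
      have hcast : (((t+2-k : ℕ)) : ℝ) = ((t+2:ℕ) : ℝ) - (k:ℝ) := by
        push_cast [Nat.cast_sub hk']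
        ring
      simp only [hF]
      rw [hcast]
    rw [Finset.sum_congr rfl hterm]
    have hrefl2 : ∀ k : ℕ, t + 2 - k = t + 2 + 1 - 1 - k := fun k => by omega
    simp only [hrefl2]
    rw [Finset.sum_range_reflect F (t+2+1)]
    have hFb : ∀ b ∈ Finset.range (t+2+1), F b = ((b*(b-1)*((n-2+b).choose b) : ℕ) : ℝ) := by
      intro b _
      cases b with
      | zero => simp [hF]
      | succ b => rw [hF]; push_cast [Nat.succ_sub_one]; ring
    rw [Finset.sum_congr rfl hFb, ← Nat.cast_sum, sum_id n t hn]
    have hkey := final_id n t hn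
    have hkeyR : (((n + (t+2) - 1).choose (t+2) : ℕ) : ℝ) * (((t:ℝ)+2)*((t:ℝ)+1))
        = ((n:ℝ)+1)*(n:ℝ)*(((n+t+1).choose t : ℕ) : ℝ) := by
      exact_mod_cast congrArg (Nat.cast : ℕ → ℝ) hkey
    have hCpos : 0 < (n + (t+2) - 1).choose (t+2) := Nat.choose_pos (by omega)
    have hC : (((n + (t+2) - 1).choose (t+2) : ℕ) : ℝ) ≠ 0 := by
      exact_mod_cast Nat.pos_iff_ne_zero.mp hCpos
    have hn1 : (n:ℝ) + 1 ≠ 0 := by positivity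
    have h1n : (((n-1:ℕ)) : ℝ) = (n:ℝ) - 1 := by
      push_cast [Nat.cast_sub (by omega : 1 ≤ n)]; ring
    rw [show n + (t+2) - 1 = n + t + 1 by omega] at hC hkeyR ⊢
    have hprod : ((n*(n-1)*((n + t + 1).choose t) : ℕ) : ℝ)
        = (n:ℝ) * ((n:ℝ)-1) * (((n + t + 1).choose t : ℕ) : ℝ) := by
      push_cast [h1n]; ring
    rw [hprod, inv_mul_eq_div, div_eq_iff hC]
    push_cast
    field_simp
    linear_combination (-((n:ℝ)-1)) * hkeyR
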